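/- arXiv:1201.6656 — 2 statements merged into one kernel-verified Lean document; each statement's English description precedes it below -/
import Mathlib

section
/- Let q be a natural number and q_0 a natural number all of whose prime factors are at most √x, where x ≥ 2. Then for any α ∈ ℝ and any bounded measurable η : ℝ → ℝ≥0 supported in [0,1], |S_{η,q_0}(x,α) − S_{η,1}(x,α)| ≤ ω(q_0) · ‖η‖_∞ · log x, where S_{η,q}(x,α) := ∑_n Λ(n) e(αn) 1_{gcd(n,q)=1} η(n/x) and ω(q_0) is the number of distinct prime factors of q_0. -/
open Finset in
lemma aux_vonMangoldt_sum_bound (x : ℝ) (hx : 2 ≤ x) (q0 : ℕ) (hq0 : q0 ≠ 0) :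
    ∑ n ∈ (Finset.range (Nat.floor x + 1)).filter
        (fun n => ¬ Nat.gcd n q0 = 1 ∧ ArithmeticFunction.vonMangoldt n ≠ 0),
      ArithmeticFunction.vonMangoldt n ≤ (q0.primeFactors.card : ℝ) * Real.log x := by
  classical
  have hx0 : (0:ℝ) < x := by linarith
  set T := (Finset.range (Nat.floor x + 1)).filter
      (fun n => ¬ Nat.gcd n q0 = 1 ∧ ArithmeticFunction.vonMangoldt n ≠ 0) with hT
  have hmem : ∀ n ∈ T, IsPrimePow n ∧ n.minFac ∈ q0.primeFactors ∧ (n : ℝ) ≤ x := by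
    intro n hn
    rw [hT, Finset.mem_filter, Finset.mem_range] at hn
    obtain ⟨hnr, hg, hΛ⟩ := hn
    have hpp : IsPrimePow n := ArithmeticFunction.vonMangoldt_ne_zero_iff.mp hΛ
    obtain ⟨p, k, hp, hk, rfl⟩ := hpp
    have hp' : p.Prime := hp.nat_prime
    have hmin : (p ^ k).minFac = p := hp'.pow_minFac hk.ne'
    have hdvd : p ∣ q0 := by
      by_contra hnd
      exact hg (((hp'.coprime_iff_not_dvd.mpr hnd).pow_left k))
    refine ⟨⟨p, k, hp, hk, rfl⟩, ?_, ?_⟩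
    · rw [hmin, Nat.mem_primeFactors]; exact ⟨hp', hdvd, hq0⟩
    · have h1 : (p ^ k : ℕ) ≤ Nat.floor x := Nat.lt_succ_iff.mp hnr
      calc ((p ^ k : ℕ) : ℝ) ≤ (Nat.floor x : ℝ) := by exact_mod_cast h1
        _ ≤ x := Nat.floor_le hx0.le
  have hmaps : ∀ n ∈ T, n.minFac ∈ q0.primeFactors := fun n hn => (hmem n hn).2.1
  rw [← Finset.sum_fiberwise_of_maps_to hmaps ArithmeticFunction.vonMangoldt]
  have hbound : ∀ p ∈ q0.primeFactors,
      ∑ n ∈ T.filter (fun n => n.minFac = p), ArithmeticFunction.vonMangoldt n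
        ≤ Real.log x := by
    intro p hp
    have hpp : p.Prime := Nat.prime_of_mem_primeFactors hp
    have hp1 : (1:ℝ) < p := by exact_mod_cast hpp.one_lt
    have hlogp : 0 < Real.log p := Real.log_pos hp1
    set F := T.filter (fun n => n.minFac = p) with hF
    have hrep : ∀ n ∈ F, n = p ^ (n.factorization p) ∧ 1 ≤ n.factorization p ∧
        (n.factorization p) ≤ Nat.floor (Real.log x / Real.log p) := by
      intro n hn
      rw [hF, Finset.mem_filter] at hn
      obtain ⟨hnT, hminf⟩ := hn
      obtain ⟨hppow, _, hnx⟩ := hmem n hnT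
      obtain ⟨q, k, hq, hk, rfl⟩ := hppow
      have hq' : q.Prime := hq.nat_prime
      have hqp : q = p := by rw [← hminf, hq'.pow_minFac hk.ne']
      subst hqp
      have hfact : (q ^ k).factorization q = k := by
        rw [hq'.factorization_pow, Finsupp.single_eq_same]
      rw [hfact]
      refine ⟨rfl, hk, ?_⟩
      rw [Nat.le_floor_iff (div_nonneg (Real.log_nonneg (by linarith)) hlogp.le)]
      have hlog : Real.log ((q:ℝ) ^ k) ≤ Real.log x := by
        apply Real.log_le_log (by positivity)
        exact_mod_cast hnx
      rw [Real.log_pow] at hlog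
      rw [le_div_iff₀ hlogp]
      exact hlog
    have hcard : F.card ≤ Nat.floor (Real.log x / Real.log p) := by
      have := Finset.card_le_card_of_injOn (fun n => n.factorization p)
        (fun n hn => Finset.mem_Icc.mpr ⟨(hrep n hn).2.1, (hrep n hn).2.2⟩)
        (fun n1 h1 n2 h2 he => by
          have he' : n1.factorization p = n2.factorization p := he
          rw [(hrep n1 h1).1, (hrep n2 h2).1, he'])
      calc F.card ≤ (Finset.Icc 1 (Nat.floor (Real.log x / Real.log p))).card := this
        _ = Nat.floor (Real.log x / Real.log p) := by rw [Nat.card_Icc]; omega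
    have hval : ∀ n ∈ F, ArithmeticFunction.vonMangoldt n = Real.log p := by
      intro n hn
      rw [hF, Finset.mem_filter] at hn
      obtain ⟨hnT, hminf⟩ := hn
      rw [ArithmeticFunction.vonMangoldt_apply, if_pos (hmem n hnT).1, hminf]
    calc ∑ n ∈ F, ArithmeticFunction.vonMangoldt n
        = F.card * Real.log p := by rw [Finset.sum_congr rfl hval, Finset.sum_const,
            nsmul_eq_mul]
      _ ≤ (Nat.floor (Real.log x / Real.log p) : ℝ) * Real.log p := by
          apply mul_le_mul_of_nonneg_right _ hlogp.le
          exact_mod_cast hcard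
      _ ≤ (Real.log x / Real.log p) * Real.log p := by
          apply mul_le_mul_of_nonneg_right _ hlogp.le
          exact Nat.floor_le (div_nonneg (Real.log_nonneg (by linarith)) hlogp.le)
      _ = Real.log x := div_mul_cancel₀ _ hlogp.ne'
  calc ∑ p ∈ q0.primeFactors, ∑ n ∈ T.filter (fun n => n.minFac = p),
        ArithmeticFunction.vonMangoldt n
      ≤ q0.primeFactors.card • Real.log x :=
        Finset.sum_le_card_nsmul _ _ _ hbound
    _ = (q0.primeFactors.card : ℝ) * Real.log x := nsmul_eq_mul _ _

theorem S_eta_smash (x : ℝ) (hx : 2 ≤ x) (q0 : ℕ)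
    (hq0 : ∀ p : ℕ, p.Prime → p ∣ q0 → (p : ℝ) ≤ Real.sqrt x)
    (α : ℝ) (η : ℝ → ℝ) (hmeas : Measurable η) (hnn : ∀ t, 0 ≤ η t)
    (hsupp : ∀ t, t ∉ Set.Icc (0 : ℝ) 1 → η t = 0) (C : ℝ) (hC : ∀ t, η t ≤ C) :
    ‖(∑' n : ℕ, (ArithmeticFunction.vonMangoldt n : ℂ) *
          Complex.exp (2 * Real.pi * Complex.I * α * n) *
          (if Nat.gcd n q0 = 1 then 1 else 0) * (η ((n : ℝ) / x) : ℝ)) -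
        (∑' n : ℕ, (ArithmeticFunction.vonMangoldt n : ℂ) *
          Complex.exp (2 * Real.pi * Complex.I * α * n) *
          (if Nat.gcd n 1 = 1 then 1 else 0) * (η ((n : ℝ) / x) : ℝ))‖ ≤
      (q0.primeFactors.card : ℝ) * C * Real.log x := by
  classical
  have hx0 : (0:ℝ) < x := by linarith
  have hq0ne : q0 ≠ 0 := by
    rintro rfl
    obtain ⟨p, hple, hp⟩ := Nat.exists_infinite_primes (⌈Real.sqrt x⌉₊ + 1)
    have h1 := hq0 p hp (dvd_zero p)
    have h2 : ((⌈Real.sqrt x⌉₊ + 1 : ℕ) : ℝ) ≤ p := by exact_mod_cast hple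
    have h3 := Nat.le_ceil (Real.sqrt x)
    push_cast at h2
    linarith
  have hC0 : 0 ≤ C := le_trans (hnn 0) (hC 0)
  set N := Nat.floor x with hN
  set s : Finset ℕ := Finset.range (N + 1) with hs
  have hη0 : ∀ n : ℕ, n ∉ s → η ((n:ℝ)/x) = 0 := by
    intro n hn
    apply hsupp
    have hn' : N + 1 ≤ n := by
      by_contra h
      exact hn (Finset.mem_range.mpr (by omega))
    have hxn : x < n := by
      calc x < N + 1 := Nat.lt_floor_add_one x
        _ ≤ n := by exact_mod_cast hn'
    have h1 : 1 < (n:ℝ)/x := (one_lt_div hx0).mpr hxn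
    exact fun h => absurd h.2 (not_le.mpr h1)
  have ht1 : (∑' n : ℕ, (ArithmeticFunction.vonMangoldt n : ℂ) *
          Complex.exp (2 * Real.pi * Complex.I * α * n) *
          (if Nat.gcd n q0 = 1 then 1 else 0) * (η ((n : ℝ) / x) : ℝ)) =
      ∑ n ∈ s, (ArithmeticFunction.vonMangoldt n : ℂ) *
          Complex.exp (2 * Real.pi * Complex.I * α * n) *
          (if Nat.gcd n q0 = 1 then 1 else 0) * (η ((n : ℝ) / x) : ℝ) :=
    tsum_eq_sum (fun n hn => by rw [hη0 n hn]; simp)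
  have ht2 : (∑' n : ℕ, (ArithmeticFunction.vonMangoldt n : ℂ) *
          Complex.exp (2 * Real.pi * Complex.I * α * n) *
          (if Nat.gcd n 1 = 1 then 1 else 0) * (η ((n : ℝ) / x) : ℝ)) =
      ∑ n ∈ s, (ArithmeticFunction.vonMangoldt n : ℂ) *
          Complex.exp (2 * Real.pi * Complex.I * α * n) *
          (if Nat.gcd n 1 = 1 then 1 else 0) * (η ((n : ℝ) / x) : ℝ) :=
    tsum_eq_sum (fun n hn => by rw [hη0 n hn]; simp)
  rw [ht1, ht2, ← Finset.sum_sub_distrib]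
  refine le_trans (norm_sum_le _ _) ?_
  have hexp : ∀ n : ℕ, ‖Complex.exp (2 * (Real.pi:ℂ) * Complex.I * (α:ℂ) * (n:ℂ))‖ = 1 := by
    intro n
    have heq : (2 * (Real.pi:ℂ) * Complex.I * (α:ℂ) * (n:ℂ)) =
        ((2 * Real.pi * α * n : ℝ) : ℂ) * Complex.I := by push_cast; ring
    rw [heq, Complex.norm_exp_ofReal_mul_I]
  have hpt : ∀ n ∈ s, ‖(ArithmeticFunction.vonMangoldt n : ℂ) *
          Complex.exp (2 * Real.pi * Complex.I * α * n) *
          (if Nat.gcd n q0 = 1 then 1 else 0) * (η ((n : ℝ) / x) : ℝ) -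
        ((ArithmeticFunction.vonMangoldt n : ℂ) *
          Complex.exp (2 * Real.pi * Complex.I * α * n) *
          (if Nat.gcd n 1 = 1 then 1 else 0) * (η ((n : ℝ) / x) : ℝ))‖ ≤
      (if ¬ Nat.gcd n q0 = 1 ∧ ArithmeticFunction.vonMangoldt n ≠ 0 then
        ArithmeticFunction.vonMangoldt n * C else 0) := by
    intro n _
    by_cases hg : Nat.gcd n q0 = 1
    · simp [hg]
    · by_cases hΛ : ArithmeticFunction.vonMangoldt n = 0
      · simp [hg, hΛ]
      · have e1 : (if Nat.gcd n q0 = 1 then (1:ℂ) else 0) = 0 := if_neg hg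
        have e2 : (if Nat.gcd n 1 = 1 then (1:ℂ) else 0) = 1 := if_pos (Nat.gcd_one_right n)
        rw [e1, e2, if_pos (show ¬ Nat.gcd n q0 = 1 ∧ ArithmeticFunction.vonMangoldt n ≠ 0
          from ⟨hg, hΛ⟩)]
        simp only [mul_zero, mul_one, zero_mul, zero_sub, norm_neg]
        rw [norm_mul, norm_mul, Complex.norm_real, Complex.norm_real, hexp n]
        rw [Real.norm_eq_abs, Real.norm_eq_abs,
          abs_of_nonneg ArithmeticFunction.vonMangoldt_nonneg, abs_of_nonneg (hnn _)]
        rw [mul_one]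
        exact mul_le_mul_of_nonneg_left (hC _) ArithmeticFunction.vonMangoldt_nonneg
  refine le_trans (Finset.sum_le_sum hpt) ?_
  rw [← Finset.sum_filter]
  rw [← Finset.sum_mul]
  calc (∑ n ∈ s.filter (fun n => ¬ Nat.gcd n q0 = 1 ∧ ArithmeticFunction.vonMangoldt n ≠ 0),
        ArithmeticFunction.vonMangoldt n) * C
      ≤ ((q0.primeFactors.card : ℝ) * Real.log x) * C :=
        mul_le_mul_of_nonneg_right (aux_vonMangoldt_sum_bound x hx q0 hq0ne) hC0
    _ = (q0.primeFactors.card : ℝ) * C * Real.log x := by ring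
end

section
/- For real q ≥ 1, ∫_{1/2}^{q−3/2} y · csc²(πy/(2(q−1))) dy ≤ (2(q−1)/π)² · (log cot(π/(4(q−1))) + 1), provided q ≥ 2. -/
theorem cosec_integral_bound (q : ℝ) (hq : 2 ≤ q) :
    (∫ y in (1/2 : ℝ)..(q - 3/2),
        y * (1 / Real.sin (Real.pi * y / (2 * (q - 1)))) ^ 2) ≤
      (2 * (q - 1) / Real.pi) ^ 2 *
        (Real.log (Real.cos (Real.pi / (4 * (q - 1))) /
            Real.sin (Real.pi / (4 * (q - 1)))) + 1) := by
  have hq0 : (0:ℝ) < q - 1 := by linarith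
  have hq1 : (1:ℝ) ≤ q - 1 := by linarith
  have hπ := Real.pi_pos
  set k : ℝ := Real.pi / (2*(q-1)) with hk
  have hk0 : 0 < k := by positivity
  set c : ℝ := 2*(q-1)/Real.pi with hc
  have hc0 : 0 < c := by positivity
  have hck : c * k = 1 := by
    rw [hc, hk]; field_simp
  have hle : (1/2:ℝ) ≤ q - 3/2 := by linarith
  have hkpi : k * (2*(q-1)) = Real.pi := by rw [hk]; field_simp
  have hkle : k ≤ Real.pi / 2 := by
    rw [hk]
    rw [div_le_div_iff₀ (by positivity) (by norm_num)]
    nlinarith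
  -- sin (k*y) positive on the interval
  have hsin : ∀ y ∈ Set.Icc (1/2:ℝ) (q - 3/2), 0 < Real.sin (k*y) := by
    intro y hy
    apply Real.sin_pos_of_pos_of_lt_pi
    · nlinarith [hy.1]
    · nlinarith [hy.2]
  have harg : ∀ y : ℝ, Real.pi * y / (2*(q-1)) = k * y := by
    intro y; rw [hk]; ring
  set f : ℝ → ℝ := fun y => y * (1 / Real.sin (Real.pi * y / (2 * (q - 1)))) ^ 2 with hf
  set F : ℝ → ℝ := fun y =>
    c^2 * Real.log (Real.sin (k*y)) - c * (y * (Real.cos (k*y) / Real.sin (k*y))) with hF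
  have huIcc : Set.uIcc (1/2:ℝ) (q - 3/2) = Set.Icc (1/2:ℝ) (q - 3/2) := Set.uIcc_of_le hle
  have hderiv : ∀ y ∈ Set.uIcc (1/2:ℝ) (q - 3/2), HasDerivAt F (f y) y := by
    intro y hy
    rw [huIcc] at hy
    have hs := hsin y hy
    have hsne : Real.sin (k*y) ≠ 0 := ne_of_gt hs
    have h1 : HasDerivAt (fun y : ℝ => k * y) k y := by
      simpa using (hasDerivAt_id y).const_mul k
    have hsd : HasDerivAt (fun y : ℝ => Real.sin (k*y)) (Real.cos (k*y) * k) y :=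
      (Real.hasDerivAt_sin (k*y)).comp y h1
    have hcd : HasDerivAt (fun y : ℝ => Real.cos (k*y)) (-Real.sin (k*y) * k) y :=
      (Real.hasDerivAt_cos (k*y)).comp y h1
    have hlog : HasDerivAt (fun y : ℝ => Real.log (Real.sin (k*y)))
        ((Real.cos (k*y) * k) / Real.sin (k*y)) y := hsd.log hsne
    have hdiv : HasDerivAt (fun y : ℝ => Real.cos (k*y) / Real.sin (k*y))
        ((-Real.sin (k*y) * k * Real.sin (k*y) - Real.cos (k*y) * (Real.cos (k*y) * k)) /
          Real.sin (k*y) ^ 2) y := hcd.div hsd hsne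
    have hprod : HasDerivAt (fun y : ℝ => y * (Real.cos (k*y) / Real.sin (k*y)))
        (1 * (Real.cos (k*y) / Real.sin (k*y)) + y *
          ((-Real.sin (k*y) * k * Real.sin (k*y) - Real.cos (k*y) * (Real.cos (k*y) * k)) /
            Real.sin (k*y) ^ 2)) y := (hasDerivAt_id y).mul hdiv
    have htot := (hlog.const_mul (c^2)).sub (hprod.const_mul c)
    convert htot using 1
    case e'_4 => rfl
    case e'_5 => rfl
    case e'_8 => rfl
    rw [hf]
    simp only [harg y]
    have hpyth := Real.sin_sq_add_cos_sq (k*y)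
    linear_combination (-(c*y*k) * (1/Real.sin (k*y))^2) * hpyth +
      (-(y*(1/Real.sin (k*y))^2 + c * (Real.cos (k*y)/Real.sin (k*y)))) * hck
  have hint : IntervalIntegrable f MeasureTheory.volume (1/2:ℝ) (q - 3/2) := by
    apply ContinuousOn.intervalIntegrable
    rw [huIcc]
    apply ContinuousOn.mul continuousOn_id
    apply ContinuousOn.pow
    apply ContinuousOn.div continuousOn_const
    · fun_prop
    · intro y hy
      rw [harg y]
      exact ne_of_gt (hsin y hy)
  rw [intervalIntegral.integral_eq_sub_of_hasDerivAt hderiv hint]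
  -- Now evaluate boundary terms
  set t : ℝ := k / 2 with htdef
  have hteq : Real.pi / (4*(q-1)) = t := by
    rw [htdef, hk, div_div]; congr 1; ring
  have hka : k * (1/2 : ℝ) = t := by rw [htdef]; ring
  have hkb : k * (q - 3/2) = Real.pi / 2 - t := by
    rw [htdef]
    have : Real.pi = k * (2*(q-1)) := hkpi.symm
    rw [this]; ring
  have ht0 : 0 < t := by rw [htdef]; positivity
  have htlt : t < Real.pi / 2 := by
    rw [htdef]; nlinarith
  have hsint : 0 < Real.sin t := Real.sin_pos_of_pos_of_lt_pi ht0 (by linarith)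
  have hcost : 0 < Real.cos t := Real.cos_pos_of_mem_Ioo ⟨by linarith, htlt⟩
  have htan : t < Real.tan t := Real.lt_tan ht0 htlt
  have h3 : t * Real.cos t < Real.sin t := by
    rw [Real.tan_eq_sin_div_cos] at htan
    exact (lt_div_iff₀ hcost).mp htan
  have hcot : Real.cos t / Real.sin t ≤ 1 / t := by
    rw [div_le_div_iff₀ hsint ht0]
    nlinarith
  have h4 : t * (2*c) = 1 := by rw [htdef]; linear_combination hck
  have hinv : 1 / t = 2 * c := by
    rw [div_eq_iff (ne_of_gt ht0)]
    linear_combination -h4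
  rw [hF]
  simp only [hka, hkb, Real.sin_pi_div_two_sub, Real.cos_pi_div_two_sub, hteq]
  rw [Real.log_div (ne_of_gt hcost) (ne_of_gt hsint)]
  have h1 : (q - 3/2) * (Real.sin t / Real.cos t) ≥ 0 := by positivity
  have h2 : (1/2 : ℝ) * (Real.cos t / Real.sin t) ≤ c := by
    rw [hinv] at hcot
    nlinarith
  have h5 : c * ((1/2 : ℝ) * (Real.cos t / Real.sin t)) ≤ c * c :=
    mul_le_mul_of_nonneg_left h2 hc0.le
  have h6 : 0 ≤ c * ((q - 3/2) * (Real.sin t / Real.cos t)) := mul_nonneg hc0.le h1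
  nlinarith [h5, h6]
end
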